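/- For every nonnegative integer n, ∑_{i=0}^{n} [Γ(n-i+1/2)/Γ(n-i+1)]·[Γ(n+i+3/2)/Γ(n+i+2)] = π/2. -/

import Mathlib

open Finset Real

noncomputable def aG (k : ℕ) : ℝ := Real.Gamma (k + 1/2) / Real.Gamma (k + 1)

lemma aG_succ (k : ℕ) : aG (k + 1) = aG k * ((k + 1/2) / (k + 1)) := by
  unfold aG
  have h1 : ((k : ℝ) + 1) + 1/2 = ((k : ℝ) + 1/2) + 1 := by ring
  have h2 : ((k : ℝ) + 1) + 1 = ((k : ℝ) + 1) + 1 := rfl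
  push_cast
  rw [h1, Real.Gamma_add_one (by positivity), show ((k:ℝ)+1)+1 = ((k:ℝ)+1)+1 from rfl,
    Real.Gamma_add_one (by positivity)]
  have hk1 : Real.Gamma ((k:ℝ)+1) ≠ 0 := (Real.Gamma_pos_of_pos (by positivity)).ne'
  field_simp

noncomputable def SG (m : ℕ) : ℝ := ∑ k ∈ Finset.range (m + 1), aG k * aG (m - k)

lemma sym (m : ℕ) : ∑ k ∈ Finset.range (m + 1), (k : ℝ) * (aG k * aG (m - k))
    = m / 2 * SG m := by
  have hre := Finset.sum_range_reflect
    (fun k => (k : ℝ) * (aG k * aG (m - k))) (m + 1)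
  have h2 : ∑ k ∈ Finset.range (m + 1), (((m - k : ℕ)) : ℝ) * (aG (m - k) * aG k)
      = ∑ k ∈ Finset.range (m + 1), (k : ℝ) * (aG k * aG (m - k)) := by
    rw [← hre]
    apply Finset.sum_congr rfl
    intro k hk
    simp only [Finset.mem_range] at hk
    have hk' : k ≤ m := Nat.lt_succ_iff.mp hk
    have e1 : m + 1 - 1 - k = m - k := by omega
    have e2 : m - (m - k) = k := by omega
    rw [e1, e2]
  have key : (2:ℝ) * ∑ k ∈ Finset.range (m + 1), (k : ℝ) * (aG k * aG (m - k))
      = ∑ k ∈ Finset.range (m + 1), (m : ℝ) * (aG k * aG (m - k)) := by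
    rw [two_mul]
    nth_rewrite 2 [← h2]
    rw [← Finset.sum_add_distrib]
    apply Finset.sum_congr rfl
    intro k hk
    simp only [Finset.mem_range] at hk
    have hk' : k ≤ m := Nat.lt_succ_iff.mp hk
    have : (((m - k : ℕ)) : ℝ) = (m : ℝ) - k := by
      rw [Nat.cast_sub hk']
    rw [this]
    ring
  rw [← Finset.mul_sum] at key
  unfold SG
  linarith

lemma SG_succ (m : ℕ) : SG (m + 1) = SG m := by
  have key : ((m : ℝ) + 1) * SG (m + 1) = ((m : ℝ) + 1) * SG m := by
    have h1 : ((m : ℝ) + 1) * SG (m + 1)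
        = 2 * ∑ k ∈ Finset.range (m + 2), (k : ℝ) * (aG k * aG (m + 1 - k)) := by
      have := sym (m + 1)
      push_cast at this
      rw [this]
      ring
    rw [h1]
    have h2 : ∑ k ∈ Finset.range (m + 2), (k : ℝ) * (aG k * aG (m + 1 - k))
        = ∑ j ∈ Finset.range (m + 1), ((j : ℝ) + 1) * (aG (j + 1) * aG (m - j)) := by
      rw [Finset.sum_range_succ'] 
      simp only [Nat.cast_zero, zero_mul, add_zero]
      apply Finset.sum_congr rfl
      intro j hj
      simp only [Finset.mem_range] at hj
      have : m + 1 - (j + 1) = m - j := by omega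
      rw [this]
      push_cast
      ring
    rw [h2]
    have h3 : ∀ j ∈ Finset.range (m + 1),
        ((j : ℝ) + 1) * (aG (j + 1) * aG (m - j))
        = ((j : ℝ) + 1/2) * (aG j * aG (m - j)) := by
      intro j hj
      rw [aG_succ]
      have : ((j:ℝ) + 1) ≠ 0 := by positivity
      field_simp
    rw [Finset.sum_congr rfl h3]
    have h4 : ∑ j ∈ Finset.range (m + 1), ((j : ℝ) + 1/2) * (aG j * aG (m - j))
        = (∑ j ∈ Finset.range (m + 1), (j : ℝ) * (aG j * aG (m - j)))
          + (1/2) * SG m := by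
      unfold SG
      rw [Finset.mul_sum, ← Finset.sum_add_distrib]
      apply Finset.sum_congr rfl
      intro j hj
      ring
    rw [h4, sym]
    ring
  have : ((m : ℝ) + 1) ≠ 0 := by positivity
  exact mul_left_cancel₀ this key

lemma SG_eq (m : ℕ) : SG m = π := by
  induction m with
  | zero =>
    unfold SG aG
    simp only [Finset.range_one, Finset.sum_singleton, Nat.zero_sub, Nat.cast_zero, zero_add]
    rw [Real.Gamma_one, Real.Gamma_one_half_eq, div_one]
    exact Real.mul_self_sqrt Real.pi_pos.le
  | succ k ih => rw [SG_succ, ih]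

theorem gamma_sum_identity_2 (n : ℕ) :
    ∑ i ∈ Finset.range (n + 1),
      (Real.Gamma ((n : ℝ) - i + 1/2) / Real.Gamma ((n : ℝ) - i + 1)) *
        (Real.Gamma ((n : ℝ) + i + 3/2) / Real.Gamma ((n : ℝ) + i + 2)) =
      π / 2 := by
  have hgoal : ∑ i ∈ Finset.range (n + 1),
      (Real.Gamma ((n : ℝ) - i + 1/2) / Real.Gamma ((n : ℝ) - i + 1)) *
        (Real.Gamma ((n : ℝ) + i + 3/2) / Real.Gamma ((n : ℝ) + i + 2))
      = ∑ i ∈ Finset.range (n + 1), aG (n - i) * aG (n + 1 + i) := by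
    apply Finset.sum_congr rfl
    intro i hi
    simp only [Finset.mem_range] at hi
    have hi' : i ≤ n := Nat.lt_succ_iff.mp hi
    unfold aG
    have c1 : (((n - i : ℕ)) : ℝ) = (n : ℝ) - i := by
      rw [Nat.cast_sub hi']
    have c2 : (((n + 1 + i : ℕ)) : ℝ) = (n : ℝ) + 1 + i := by push_cast; ring
    rw [c1, c2]
    have e1 : (n:ℝ) + 1 + i + 1/2 = (n:ℝ) + i + 3/2 := by ring
    have e2 : (n:ℝ) + 1 + i + 1 = (n:ℝ) + i + 2 := by ring
    rw [e1, e2]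
  rw [hgoal]
  have hsplit : SG (2 * n + 1)
      = (∑ i ∈ Finset.range (n + 1), aG (n - i) * aG (n + 1 + i))
        + (∑ i ∈ Finset.range (n + 1), aG (n - i) * aG (n + 1 + i)) := by
    unfold SG
    have h22 : 2 * n + 1 + 1 = (n + 1) + (n + 1) := by omega
    rw [h22, Finset.sum_range_add]
    congr 1
    · rw [← Finset.sum_range_reflect (fun i => aG (n - i) * aG (n + 1 + i)) (n + 1)]
      apply Finset.sum_congr rfl
      intro k hk
      simp only [Finset.mem_range] at hk
      have hk' : k ≤ n := Nat.lt_succ_iff.mp hk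
      congr 2 <;> omega
    · apply Finset.sum_congr rfl
      intro k hk
      simp only [Finset.mem_range] at hk
      have hk' : k ≤ n := Nat.lt_succ_iff.mp hk
      rw [mul_comm]
      congr 2 <;> omega
  have := SG_eq (2 * n + 1)
  rw [hsplit] at this
  linarith
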